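/- Let X be an integrable complex random variable on a probability space with E[X] = 0, let 𝒢 be a sub-σ-algebra, X₀ = E[X | 𝒢], X₁ = X − X₀, and let A ∈ 𝒢 be a set on which |X₀| ≥ 2 almost surely (and X₁ is supported on A). Then E[(1 + |X|²)^{1/2}] ≥ (1 + (1/12) E[|X₀|²])^{1/2} + (1/4) E[|X₁|], provided additionally that |X₀| ≤ 2 a.s. and |X| ≤ 2 on the complement of A. -/

import Mathlib

open MeasureTheory Filter

section Aux
variable {Ω : Type*} {𝒢 m0 : MeasurableSpace Ω} {μ : Measure Ω}

lemma aux_sqrt_lin (u : ℝ) (hu : 0 ≤ u) :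
    1/2 + (5/6) * u ≤ Real.sqrt (1 + u^2) := by
  have h := Real.sqrt_le_sqrt (show (1/2 + (5/6)*u)^2 ≤ 1 + u^2 by
    nlinarith [sq_nonneg (u - 15/11)])
  rwa [Real.sqrt_sq (by positivity)] at h

lemma aux_sqrt_quad (u : ℝ) (hu0 : 0 ≤ u) (hu : u ≤ 2) :
    1 + (1/4) * u^2 ≤ Real.sqrt (1 + u^2) := by
  have h4 : u^2 ≤ 4 := by nlinarith
  have h := Real.sqrt_le_sqrt (show (1 + (1/4)*u^2)^2 ≤ 1 + u^2 by nlinarith [sq_nonneg u])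
  rwa [Real.sqrt_sq (by positivity)] at h

lemma aux_sqrt_ub (t : ℝ) (ht : 0 ≤ t) : Real.sqrt (1 + t) ≤ 1 + t/2 := by
  have h := Real.sqrt_le_sqrt (show 1 + t ≤ (1 + t/2)^2 by nlinarith)
  rwa [Real.sqrt_sq (by positivity)] at h

lemma condexp_re_aux (hm : 𝒢 ≤ m0) [SigmaFinite (μ.trim hm)] {f : Ω → ℂ}
    (hf : Integrable f μ) :
    (fun ω => ((μ[f|𝒢]) ω).re) =ᵐ[μ] μ[fun ω => (f ω).re|𝒢] := by
  have hre : ∀ (g : Ω → ℂ), Integrable g μ → Integrable (fun ω => (g ω).re) μ := by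
    intro g hg
    refine Integrable.mono' hg.norm (Complex.continuous_re.comp_aestronglyMeasurable hg.1) ?_
    exact Eventually.of_forall fun ω => by
      simpa [Real.norm_eq_abs] using Complex.abs_re_le_norm (g ω)
  refine ae_eq_condExp_of_forall_setIntegral_eq hm (hre f hf) ?_ ?_ ?_
  · exact fun s _ _ => (hre _ integrable_condExp).integrableOn
  · intro s hs _
    have h1 : ∫ ω in s, ((μ[f|𝒢]) ω).re ∂μ = (∫ ω in s, (μ[f|𝒢]) ω ∂μ).re := by
      simpa using integral_re (𝕜 := ℂ) (μ := μ.restrict s)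
        (integrable_condExp.integrableOn : Integrable _ (μ.restrict s))
    have h2 : ∫ ω in s, (f ω).re ∂μ = (∫ ω in s, f ω ∂μ).re := by
      simpa using integral_re (𝕜 := ℂ) (μ := μ.restrict s)
        (hf.integrableOn : Integrable _ (μ.restrict s))
    rw [h1, h2, setIntegral_condExp hm hf hs]
  · exact StronglyMeasurable.aestronglyMeasurable (Complex.continuous_re.comp_stronglyMeasurable
      stronglyMeasurable_condExp)

lemma norm_condexp_le_aux (hm : 𝒢 ≤ m0) [SigmaFinite (μ.trim hm)] {f : Ω → ℂ}
    (hf : Integrable f μ) :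
    ∀ᵐ ω ∂μ, ‖(μ[f|𝒢]) ω‖ ≤ (μ[fun ω => ‖f ω‖|𝒢]) ω := by
  obtain ⟨s, hsc, hsd⟩ := TopologicalSpace.exists_countable_dense ℂ
  have hN0 : ∀ᵐ ω ∂μ, 0 ≤ (μ[fun ω => ‖f ω‖|𝒢]) ω :=
    condExp_nonneg (Eventually.of_forall fun ω => norm_nonneg _)
  have hkey : ∀ᵐ ω ∂μ, ∀ c ∈ s,
      ((starRingEnd ℂ) c * (μ[f|𝒢]) ω).re ≤ ‖c‖ * (μ[fun ω => ‖f ω‖|𝒢]) ω := by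
    rw [ae_ball_iff hsc]
    intro c _
    have hint : Integrable ((starRingEnd ℂ) c • f) μ := hf.smul _
    have hA : (fun ω => ((starRingEnd ℂ) c * (μ[f|𝒢]) ω).re)
        =ᵐ[μ] μ[fun ω => (((starRingEnd ℂ) c • f) ω).re|𝒢] := by
      have h1 := condexp_re_aux hm hint
      have h2 : μ[(starRingEnd ℂ) c • f|𝒢] =ᵐ[μ] (starRingEnd ℂ) c • μ[f|𝒢] :=
        condExp_smul _ _ _
      refine EventuallyEq.trans ?_ h1
      filter_upwards [h2] with ω hω
      rw [hω]
      simp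
    have hB : μ[fun ω => (((starRingEnd ℂ) c • f) ω).re|𝒢]
        ≤ᵐ[μ] μ[fun ω => ‖c‖ * ‖f ω‖|𝒢] := by
      refine condExp_mono ?_ (hf.norm.const_mul _) ?_
      · refine Integrable.mono' hint.norm
          (Complex.continuous_re.comp_aestronglyMeasurable hint.1) ?_
        exact Eventually.of_forall fun ω => by
          simpa [Real.norm_eq_abs] using Complex.abs_re_le_norm (((starRingEnd ℂ) c • f) ω)
      · refine Eventually.of_forall fun ω => ?_
        calc (((starRingEnd ℂ) c • f) ω).re ≤ ‖((starRingEnd ℂ) c • f) ω‖ :=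
              Complex.re_le_norm _
          _ = ‖c‖ * ‖f ω‖ := by simp [norm_smul]
    have hC : μ[fun ω => ‖c‖ * ‖f ω‖|𝒢]
        =ᵐ[μ] fun ω => ‖c‖ * (μ[fun ω => ‖f ω‖|𝒢]) ω := by
      have h := condExp_smul (μ := μ) (m := 𝒢) (‖c‖) (fun ω => ‖f ω‖)
      have he : (‖c‖ • fun ω => ‖f ω‖) = fun ω => ‖c‖ * ‖f ω‖ := by
        funext ω; simp
      rw [he] at h
      filter_upwards [h] with ω hω
      rw [hω]; simp
    filter_upwards [hA, hB, hC] with ω h1 h2 h3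
    calc ((starRingEnd ℂ) c * (μ[f|𝒢]) ω).re
        = (μ[fun ω => (((starRingEnd ℂ) c • f) ω).re|𝒢]) ω := h1
      _ ≤ (μ[fun ω => ‖c‖ * ‖f ω‖|𝒢]) ω := h2
      _ = ‖c‖ * (μ[fun ω => ‖f ω‖|𝒢]) ω := h3
  filter_upwards [hkey, hN0] with ω hω hN
  set g := (μ[f|𝒢]) ω with hg
  set N := (μ[fun ω => ‖f ω‖|𝒢]) ω with hNdef
  by_cases h0 : g = 0
  · simp [h0, hN]
  have hgpos : 0 < ‖g‖ := norm_pos_iff.2 h0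
  have key2 : ∀ ε : ℝ, 0 < ε → ‖g‖^2 ≤ ‖g‖ * N + ε * (‖g‖ + N) := by
    intro ε hε
    obtain ⟨c, hcball, hcs⟩ := Metric.dense_iff.1 hsd g ε hε
    have hdist : ‖c - g‖ < ε := by
      rw [← dist_eq_norm]; exact Metric.mem_ball.1 hcball
    have hc1 : ‖c‖ ≤ ‖g‖ + ε := by
      have := norm_sub_norm_le c g; linarith
    have hsplit : (starRingEnd ℂ) c * g
        = (starRingEnd ℂ) g * g + (starRingEnd ℂ) (c - g) * g := by
      rw [map_sub]; ring
    have h1 : ((starRingEnd ℂ) g * g).re = ‖g‖^2 := by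
      rw [mul_comm, Complex.mul_conj]
      simp [Complex.normSq_eq_norm_sq, ← Complex.ofReal_pow]
    have h2 : |((starRingEnd ℂ) (c - g) * g).re| ≤ ε * ‖g‖ := by
      refine (Complex.abs_re_le_norm _).trans ?_
      have : ‖(starRingEnd ℂ) (c - g) * g‖ = ‖c - g‖ * ‖g‖ := by
        rw [norm_mul, Complex.norm_conj]
      rw [this]
      exact mul_le_mul_of_nonneg_right hdist.le (norm_nonneg _)
    have h3 : ‖g‖^2 - ε * ‖g‖ ≤ ((starRingEnd ℂ) c * g).re := by
      rw [hsplit, Complex.add_re, h1]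
      have := abs_le.1 h2
      linarith
    have h4 := hω c hcs
    have h5 : ‖c‖ * N ≤ (‖g‖ + ε) * N := mul_le_mul_of_nonneg_right hc1 hN
    nlinarith
  have hfin : ‖g‖^2 ≤ ‖g‖ * N := by
    by_contra hcon
    push_neg at hcon
    have hd : 0 < (‖g‖^2 - ‖g‖*N) / (‖g‖ + N + 1) :=
      div_pos (by linarith) (by linarith)
    have h := key2 _ hd
    have hlt : (‖g‖^2 - ‖g‖*N)/(‖g‖ + N + 1) * (‖g‖ + N) < ‖g‖^2 - ‖g‖*N := by
      rw [div_mul_eq_mul_div, div_lt_iff₀ (by linarith)]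
      nlinarith
    linarith
  exact le_of_mul_le_mul_left (by nlinarith [hfin]) hgpos
end Aux

theorem stmt_17_aux {Ω : Type*} {𝒢 m0 : MeasurableSpace Ω} (μ : Measure Ω) [IsProbabilityMeasure μ]
    (h𝒢 : 𝒢 ≤ m0)
    (X : Ω → ℂ) (hX : Integrable X μ)
    (X₀ X₁ : Ω → ℂ) (hX₀ : X₀ = μ[X | 𝒢]) (hX₁ : ∀ ω, X₁ ω = X ω - X₀ ω)
    (A : Set Ω) (hA : MeasurableSet[𝒢] A)
    (hAX₀ : ∀ᵐ ω ∂μ, ω ∈ A → 2 ≤ ‖X₀ ω‖)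
    (hsupp : ∀ᵐ ω ∂μ, ω ∉ A → X₁ ω = 0)
    (hX₀bd : ∀ᵐ ω ∂μ, ‖X₀ ω‖ ≤ 2)
    (hXbd : ∀ᵐ ω ∂μ, ω ∉ A → ‖X ω‖ ≤ 2) :
    Real.sqrt (1 + (1 / 12) * ∫ ω, ‖X₀ ω‖ ^ 2 ∂μ)
        + (1 / 4) * ∫ ω, ‖X₁ ω‖ ∂μ
      ≤ ∫ ω, Real.sqrt (1 + ‖X ω‖ ^ 2) ∂μ := by
  have hA0 : MeasurableSet[m0] A := h𝒢 _ hA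
  have intX₀ : Integrable X₀ μ := hX₀ ▸ integrable_condExp
  have intX₁ : Integrable X₁ μ := by
    have he : X₁ = fun ω => X ω - X₀ ω := funext hX₁
    exact he ▸ hX.sub intX₀
  have intnX : Integrable (fun ω => ‖X ω‖) μ := hX.norm
  have intnX₀ : Integrable (fun ω => ‖X₀ ω‖) μ := intX₀.norm
  have intnX₁ : Integrable (fun ω => ‖X₁ ω‖) μ := intX₁.norm
  have intsqX₀ : Integrable (fun ω => ‖X₀ ω‖^2) μ := by
    refine Integrable.mono' (intnX₀.const_mul 2) (intX₀.1.norm.pow 2) ?_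
    filter_upwards [hX₀bd] with ω h
    rw [Real.norm_eq_abs, abs_of_nonneg (by positivity)]
    nlinarith [norm_nonneg (X₀ ω)]
  have intsqrt : Integrable (fun ω => Real.sqrt (1 + ‖X ω‖^2)) μ := by
    have hcont : Continuous fun u : ℝ => Real.sqrt (1 + u^2) := by
      exact Real.continuous_sqrt.comp (by continuity)
    refine Integrable.mono' ((integrable_const 1).add intnX)
      (hcont.comp_aestronglyMeasurable hX.1.norm) ?_
    refine Eventually.of_forall fun ω => ?_
    rw [Real.norm_eq_abs, abs_of_nonneg (Real.sqrt_nonneg _)]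
    have h := Real.sqrt_le_sqrt (show 1 + ‖X ω‖^2 ≤ (1 + ‖X ω‖)^2 by
      nlinarith [norm_nonneg (X ω)])
    rwa [Real.sqrt_sq (by positivity)] at h
  -- on A, ‖X₀‖ = 2 a.e.
  have hAe2 : ∀ᵐ ω ∂μ.restrict A, ‖X₀ ω‖ = 2 := by
    filter_upwards [ae_restrict_of_ae hAX₀, ae_restrict_of_ae hX₀bd, ae_restrict_mem hA0]
      with ω h1 h2 h3
    exact le_antisymm h2 (h1 h3)
  have F2 : ∫ ω in A, ‖X₀ ω‖ ∂μ = 2 * (μ A).toReal := by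
    rw [integral_congr_ae (g := fun _ => (2:ℝ)) hAe2, setIntegral_const, smul_eq_mul, mul_comm]; rfl
  have F3 : ∫ ω in A, ‖X₀ ω‖^2 ∂μ = 4 * (μ A).toReal := by
    rw [integral_congr_ae (g := fun _ => (4:ℝ))
      (hAe2.mono fun ω h => by rw [h]; norm_num), setIntegral_const, smul_eq_mul, mul_comm]; rfl
  -- on Aᶜ, X = X₀ a.e.
  have hBX : ∀ᵐ ω ∂μ.restrict Aᶜ, X ω = X₀ ω := by
    filter_upwards [ae_restrict_of_ae hsupp, ae_restrict_mem hA0.compl] with ω h1 h2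
    have h := h1 h2
    rw [hX₁ ω] at h
    exact sub_eq_zero.1 h
  -- bound on ∫‖X₁‖
  have hJ : ∫ ω, ‖X₁ ω‖ ∂μ ≤ (∫ ω in A, ‖X ω‖ ∂μ) + 2 * (μ A).toReal := by
    have h0 : ∫ ω in Aᶜ, ‖X₁ ω‖ ∂μ = 0 := by
      rw [integral_congr_ae (g := fun _ => (0:ℝ))]
      · simp
      · filter_upwards [ae_restrict_of_ae hsupp, ae_restrict_mem hA0.compl] with ω h1 h2
        simp [h1 h2]
    have hsplit : ∫ ω, ‖X₁ ω‖ ∂μ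
        = (∫ ω in A, ‖X₁ ω‖ ∂μ) + ∫ ω in Aᶜ, ‖X₁ ω‖ ∂μ :=
      (integral_add_compl hA0 intnX₁).symm
    have h1 : ∫ ω in A, ‖X₁ ω‖ ∂μ ≤ ∫ ω in A, (‖X ω‖ + ‖X₀ ω‖) ∂μ := by
      refine integral_mono intnX₁.integrableOn
        (intnX.integrableOn.add intnX₀.integrableOn) fun ω => ?_
      rw [hX₁ ω]
      exact norm_sub_le _ _
    have h2 : ∫ ω in A, (‖X ω‖ + ‖X₀ ω‖) ∂μ
        = (∫ ω in A, ‖X ω‖ ∂μ) + ∫ ω in A, ‖X₀ ω‖ ∂μ :=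
      integral_add intnX.integrableOn intnX₀.integrableOn
    rw [hsplit, h0, add_zero]
    rw [h2, F2] at h1
    linarith
  -- conditional Jensen
  have hJensen : 2 * (μ A).toReal ≤ ∫ ω in A, ‖X ω‖ ∂μ := by
    have hae : ∀ᵐ ω ∂μ, ‖X₀ ω‖ ≤ (μ[fun ω => ‖X ω‖|𝒢]) ω := by
      rw [hX₀]; exact norm_condexp_le_aux h𝒢 hX
    calc 2 * (μ A).toReal = ∫ ω in A, ‖X₀ ω‖ ∂μ := F2.symm
      _ ≤ ∫ ω in A, (μ[fun ω => ‖X ω‖|𝒢]) ω ∂μ :=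
          integral_mono_ae intnX₀.integrableOn integrable_condExp.integrableOn
            (ae_restrict_of_ae hae)
      _ = ∫ ω in A, ‖X ω‖ ∂μ := setIntegral_condExp h𝒢 hX.norm hA
  -- lower bound on A
  have FA : (1/2) * (μ A).toReal + (5/6) * ∫ ω in A, ‖X ω‖ ∂μ
      ≤ ∫ ω in A, Real.sqrt (1 + ‖X ω‖^2) ∂μ := by
    have h1 : ∫ ω in A, (1/2 + (5/6) * ‖X ω‖) ∂μ
        ≤ ∫ ω in A, Real.sqrt (1 + ‖X ω‖^2) ∂μ :=
      integral_mono ((integrable_const _).integrableOn.add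
        ((intnX.const_mul _).integrableOn)) intsqrt.integrableOn
        (fun ω => aux_sqrt_lin _ (norm_nonneg _))
    rwa [integral_add (integrable_const _).integrableOn (intnX.const_mul _).integrableOn,
      setIntegral_const, smul_eq_mul, mul_comm (μ.real A),
      integral_const_mul] at h1
  -- lower bound on Aᶜ
  have FB : (μ Aᶜ).toReal + (1/4) * ∫ ω in Aᶜ, ‖X₀ ω‖^2 ∂μ
      ≤ ∫ ω in Aᶜ, Real.sqrt (1 + ‖X ω‖^2) ∂μ := by
    have hpt : ∀ᵐ ω ∂μ.restrict Aᶜ,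
        1 + (1/4) * ‖X₀ ω‖^2 ≤ Real.sqrt (1 + ‖X ω‖^2) := by
      filter_upwards [hBX, ae_restrict_of_ae hXbd, ae_restrict_mem hA0.compl] with ω h1 h2 h3
      rw [← h1]
      exact aux_sqrt_quad _ (norm_nonneg _) (h2 h3)
    have h1 : ∫ ω in Aᶜ, (1 + (1/4) * ‖X₀ ω‖^2) ∂μ
        ≤ ∫ ω in Aᶜ, Real.sqrt (1 + ‖X ω‖^2) ∂μ :=
      integral_mono_ae ((integrable_const _).integrableOn.add
        ((intsqX₀.const_mul _).integrableOn)) intsqrt.integrableOn hpt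
    rwa [integral_add (integrable_const _).integrableOn (intsqX₀.const_mul _).integrableOn,
      setIntegral_const, smul_eq_mul, mul_one, integral_const_mul] at h1
  -- splits
  have hsplit2 : ∫ ω, ‖X₀ ω‖^2 ∂μ
      = (∫ ω in A, ‖X₀ ω‖^2 ∂μ) + ∫ ω in Aᶜ, ‖X₀ ω‖^2 ∂μ :=
    (integral_add_compl hA0 intsqX₀).symm
  have hsplit3 : ∫ ω, Real.sqrt (1 + ‖X ω‖^2) ∂μ
      = (∫ ω in A, Real.sqrt (1 + ‖X ω‖^2) ∂μ)
        + ∫ ω in Aᶜ, Real.sqrt (1 + ‖X ω‖^2) ∂μ :=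
    (integral_add_compl hA0 intsqrt).symm
  have hmeasc : (μ Aᶜ).toReal = 1 - (μ A).toReal := by
    rw [measure_compl hA0 (measure_ne_top μ A), measure_univ,
      ENNReal.toReal_sub_of_le prob_le_one ENNReal.one_ne_top, ENNReal.toReal_one]
  have hS0 : 0 ≤ ∫ ω in Aᶜ, ‖X₀ ω‖^2 ∂μ :=
    integral_nonneg fun ω => sq_nonneg _
  have ht0 : 0 ≤ ∫ ω, ‖X₀ ω‖^2 ∂μ := integral_nonneg fun ω => sq_nonneg _
  have hsq : Real.sqrt (1 + (1/12) * ∫ ω, ‖X₀ ω‖^2 ∂μ)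
      ≤ 1 + (1/24) * ∫ ω, ‖X₀ ω‖^2 ∂μ := by
    have h := aux_sqrt_ub ((1/12) * ∫ ω, ‖X₀ ω‖^2 ∂μ) (by positivity)
    linarith
  rw [hsplit3]
  linarith [FA, FB, hJ, hJensen, hsq, hmeasc, hS0, hsplit2, F3]

theorem stmt_17 {Ω : Type*} {m0 : MeasurableSpace Ω} (μ : Measure Ω) [IsProbabilityMeasure μ]
    (𝒢 : MeasurableSpace Ω) (h𝒢 : 𝒢 ≤ m0)
    (X : Ω → ℂ) (hX : Integrable X μ) (hmean : ∫ ω, X ω ∂μ = 0)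
    (X₀ X₁ : Ω → ℂ) (hX₀ : X₀ = μ[X | 𝒢]) (hX₁ : ∀ ω, X₁ ω = X ω - X₀ ω)
    (A : Set Ω) (hA : MeasurableSet[𝒢] A)
    (hAX₀ : ∀ᵐ ω ∂μ, ω ∈ A → 2 ≤ ‖X₀ ω‖)
    (hsupp : ∀ᵐ ω ∂μ, ω ∉ A → X₁ ω = 0)
    (hX₀bd : ∀ᵐ ω ∂μ, ‖X₀ ω‖ ≤ 2)
    (hXbd : ∀ᵐ ω ∂μ, ω ∉ A → ‖X ω‖ ≤ 2) :
    Real.sqrt (1 + (1 / 12) * ∫ ω, ‖X₀ ω‖ ^ 2 ∂μ)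
        + (1 / 4) * ∫ ω, ‖X₁ ω‖ ∂μ
      ≤ ∫ ω, Real.sqrt (1 + ‖X ω‖ ^ 2) ∂μ :=
  stmt_17_aux μ h𝒢 X hX X₀ X₁ hX₀ hX₁ A hA hAX₀ hsupp hX₀bd hXbd
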